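/- A graph G has no critical edges if and only if the set of global minimizers of f_G(y) = y^T(I + A_G)y over Δ_n is finite; in that case the global minimizers are exactly the vectors χ^S/α(G) for S a stable set of size α(G). -/

import Mathlib

open Matrix Finset
open scoped Classical

def IsStable {n : ℕ} (G : SimpleGraph (Fin n)) (S : Finset (Fin n)) : Prop :=
  ∀ i ∈ S, ∀ j ∈ S, ¬ G.Adj i j

noncomputable def alpha {n : ℕ} (G : SimpleGraph (Fin n)) : ℕ :=
  sSup {k | ∃ S : Finset (Fin n), IsStable G S ∧ S.card = k}

noncomputable def indic {n : ℕ} (S : Finset (Fin n)) : Fin n → ℝ :=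
  fun i => if i ∈ S then 1 else 0

noncomputable def qform {n : ℕ} (M : Matrix (Fin n) (Fin n) ℝ) (x : Fin n → ℝ) : ℝ :=
  x ⬝ᵥ M.mulVec x

noncomputable def fG {n : ℕ} (G : SimpleGraph (Fin n)) (x : Fin n → ℝ) : ℝ :=
  qform (1 + G.adjMatrix ℝ) x

noncomputable def globMin {n : ℕ} (f : (Fin n → ℝ) → ℝ) : Set (Fin n → ℝ) :=
  {x | x ∈ stdSimplex ℝ (Fin n) ∧ ∀ y ∈ stdSimplex ℝ (Fin n), f x ≤ f y}

variable {n : ℕ}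

lemma alpha_bddAbove (G : SimpleGraph (Fin n)) :
    BddAbove {k | ∃ S : Finset (Fin n), IsStable G S ∧ S.card = k} :=
  ⟨n, by rintro k ⟨S, -, rfl⟩; simpa using S.card_le_univ⟩

lemma card_le_alpha {G : SimpleGraph (Fin n)} {S : Finset (Fin n)} (hS : IsStable G S) :
    S.card ≤ alpha G :=
  le_csSup (alpha_bddAbove G) ⟨S, hS, rfl⟩

lemma alpha_exists (G : SimpleGraph (Fin n)) :
    ∃ S : Finset (Fin n), IsStable G S ∧ S.card = alpha G := by
  have h0 : (0 : ℕ) ∈ {k | ∃ S : Finset (Fin n), IsStable G S ∧ S.card = k} :=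
    ⟨∅, fun i hi => by simp at hi, by simp⟩
  exact Nat.sSup_mem ⟨0, h0⟩ (alpha_bddAbove G)

lemma alpha_pos (hn : 0 < n) (G : SimpleGraph (Fin n)) : 0 < alpha G := by
  have h : IsStable G {⟨0, hn⟩} := by
    intro i hi j hj
    simp only [Finset.mem_singleton] at hi hj
    subst hi; subst hj; simp
  have := card_le_alpha h
  simp at this; exact this

lemma fG_eq (G : SimpleGraph (Fin n)) (x : Fin n → ℝ) :
    fG G x = (∑ k, (x k)^2) + ∑ k, ∑ l, (if G.Adj k l then x k * x l else 0) := by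
  rw [fG, qform, Matrix.add_mulVec, Matrix.one_mulVec, dotProduct_add]
  congr 1
  · simp [dotProduct, sq]
  · simp only [dotProduct, mulVec, SimpleGraph.adjMatrix_apply, Finset.mul_sum]
    refine Finset.sum_congr rfl fun k _ => Finset.sum_congr rfl fun l _ => ?_
    by_cases h : G.Adj k l <;> simp [h, mul_comm]

noncomputable def dvec (i j : Fin n) : Fin n → ℝ := Pi.single i 1 - Pi.single j 1

lemma dvec_apply (i j k : Fin n) :
    dvec i j k = (if k = i then (1:ℝ) else 0) - (if k = j then 1 else 0) := by
  simp [dvec, Pi.single_apply, eq_comm]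

lemma sum_dvec (i j : Fin n) : ∑ k, dvec i j k = 0 := by
  simp [Finset.sum_sub_distrib, dvec_apply]

lemma mulVec_dvec (M : Matrix (Fin n) (Fin n) ℝ) (i j : Fin n) :
    M *ᵥ dvec i j = fun k => M k i - M k j := by
  funext k
  simp [dvec, mulVec, dotProduct_sub, dotProduct_single]

lemma dvec_dotProduct (i j : Fin n) (v : Fin n → ℝ) :
    dvec i j ⬝ᵥ v = v i - v j := by
  simp [dvec, sub_dotProduct, single_dotProduct]

noncomputable def lineC (G : SimpleGraph (Fin n)) (i j : Fin n) (x : Fin n → ℝ) : ℝ :=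
  x ⬝ᵥ (1 + G.adjMatrix ℝ) *ᵥ dvec i j + dvec i j ⬝ᵥ (1 + G.adjMatrix ℝ) *ᵥ x

lemma fG_line (G : SimpleGraph (Fin n)) {i j : Fin n} (h : G.Adj i j) (x : Fin n → ℝ)
    (s : ℝ) : fG G (x + s • dvec i j) = fG G x + s * lineC G i j x := by
  have hdd : dvec i j ⬝ᵥ (1 + G.adjMatrix ℝ) *ᵥ dvec i j = 0 := by
    rw [mulVec_dvec, dvec_dotProduct]
    simp [Matrix.add_apply, Matrix.one_apply, h, h.symm, h.ne, h.ne', G.ne_of_adj]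
  simp only [fG, qform, lineC, Matrix.mulVec_add, Matrix.mulVec_smul, dotProduct_add,
    add_dotProduct, smul_dotProduct, dotProduct_smul, smul_eq_mul, hdd]
  ring

noncomputable def suppF (x : Fin n → ℝ) : Finset (Fin n) :=
  Finset.univ.filter (fun k => x k ≠ 0)

lemma mem_suppF {x : Fin n → ℝ} {k : Fin n} : k ∈ suppF x ↔ x k ≠ 0 := by simp [suppF]

lemma fG_stable (G : SimpleGraph (Fin n)) {x : Fin n → ℝ} (hst : IsStable G (suppF x)) :
    fG G x = ∑ k, (x k)^2 := by
  rw [fG_eq]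
  have : ∀ k, ∀ l, (if G.Adj k l then x k * x l else 0) = 0 := by
    intro k l
    by_cases h : G.Adj k l
    · simp only [h, if_true]
      by_cases hk : x k = 0
      · simp [hk]
      · by_cases hl : x l = 0
        · simp [hl]
        · exact absurd h (hst k (mem_suppF.2 hk) l (mem_suppF.2 hl))
    · simp [h]
  simp [this]

lemma one_le_card_mul (x : Fin n → ℝ) (hx : x ∈ stdSimplex ℝ (Fin n)) :
    1 ≤ ((suppF x).card : ℝ) * ∑ k, (x k)^2 := by
  have h1 : ∑ k ∈ suppF x, x k = 1 := by
    rw [suppF, Finset.sum_filter_ne_zero]; exact hx.2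
  have h2 := sq_sum_le_card_mul_sum_sq (s := suppF x) (f := x)
  have h3 : ∑ k ∈ suppF x, (x k)^2 ≤ ∑ k, (x k)^2 :=
    Finset.sum_le_sum_of_subset_of_nonneg (Finset.subset_univ _)
      (fun k _ _ => sq_nonneg _)
  calc (1:ℝ) = (∑ k ∈ suppF x, x k)^2 := by rw [h1]; norm_num
    _ ≤ ((suppF x).card : ℝ) * ∑ k ∈ suppF x, (x k)^2 := h2
    _ ≤ ((suppF x).card : ℝ) * ∑ k, (x k)^2 :=
        mul_le_mul_of_nonneg_left h3 (by positivity)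

lemma lineC_swap (G : SimpleGraph (Fin n)) (i j : Fin n) (x : Fin n → ℝ) :
    lineC G j i x = - lineC G i j x := by
  have hd : dvec j i = - dvec i j := by
    funext k; simp only [Pi.neg_apply, dvec_apply]; ring
  simp [lineC, hd, Matrix.mulVec_neg, dotProduct_neg, neg_dotProduct]
  try ring

lemma lower_bound (G : SimpleGraph (Fin n)) :
    ∀ x ∈ stdSimplex ℝ (Fin n), 1 ≤ (alpha G : ℝ) * fG G x := by
  suffices H : ∀ m : ℕ, ∀ x ∈ stdSimplex ℝ (Fin n), (suppF x).card = m →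
      1 ≤ (alpha G : ℝ) * fG G x by
    intro x hx; exact H _ x hx rfl
  intro m
  induction m using Nat.strong_induction_on with
  | _ m IH =>
  intro x hx hcard
  by_cases hst : IsStable G (suppF x)
  · have h2 := one_le_card_mul x hx
    have hcle : ((suppF x).card : ℝ) ≤ alpha G := by exact_mod_cast card_le_alpha hst
    have hsq : 0 ≤ ∑ k, (x k)^2 := Finset.sum_nonneg fun k _ => sq_nonneg _
    rw [fG_stable G hst]
    calc (1:ℝ) ≤ _ := h2
      _ ≤ _ := mul_le_mul_of_nonneg_right hcle hsq
  · have key : ∀ i j : Fin n, G.Adj i j → x i ≠ 0 → x j ≠ 0 → lineC G i j x ≤ 0 →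
        1 ≤ (alpha G : ℝ) * fG G x := by
      intro i j hadj hi hj hc
      have hij : i ≠ j := hadj.ne
      have hxj : 0 < x j := (hx.1 j).lt_of_ne' hj
      set y := x + (x j) • dvec i j with hy
      have hyk : ∀ k, y k = x k + x j * dvec i j k := fun k => rfl
      have hyj : y j = 0 := by
        rw [hyk, dvec_apply]; simp [hij.symm]
      have hyi : y i = x i + x j := by
        rw [hyk, dvec_apply]; simp [hij]
      have hyo : ∀ k, k ≠ i → k ≠ j → y k = x k := by
        intro k hki hkj; rw [hyk, dvec_apply]; simp [hki, hkj]
      have hyΔ : y ∈ stdSimplex ℝ (Fin n) := by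
        constructor
        · intro k
          rcases eq_or_ne k i with rfl | hki
          · rw [hyi]; exact add_nonneg (hx.1 k) (hx.1 j)
          · rcases eq_or_ne k j with rfl | hkj
            · rw [hyj]
            · rw [hyo k hki hkj]; exact hx.1 k
        · have : ∑ k, y k = ∑ k, x k + x j * ∑ k, dvec i j k := by
            simp [hyk, Finset.sum_add_distrib, Finset.mul_sum]
          rw [this, sum_dvec, hx.2]; ring
      have hfy : fG G y ≤ fG G x := by
        rw [hy, fG_line G hadj]
        nlinarith
      have hsub : suppF y ⊆ (suppF x).erase j := by
        intro k hk
        rw [mem_suppF] at hk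
        rcases eq_or_ne k j with rfl | hkj
        · exact absurd hyj hk
        · refine Finset.mem_erase.2 ⟨hkj, mem_suppF.2 ?_⟩
          rcases eq_or_ne k i with rfl | hki
          · exact hi
          · rw [hyo k hki hkj] at hk; exact hk
      have hlt : (suppF y).card < m := by
        rw [← hcard]
        exact lt_of_le_of_lt (Finset.card_le_card hsub)
          (Finset.card_erase_lt_of_mem (mem_suppF.2 hj))
      have h1 := IH _ hlt y hyΔ rfl
      calc (1:ℝ) ≤ (alpha G : ℝ) * fG G y := h1
        _ ≤ (alpha G : ℝ) * fG G x :=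
          mul_le_mul_of_nonneg_left hfy (by positivity)
    rw [IsStable] at hst; push_neg at hst
    obtain ⟨i, hi, j, hj, hadj⟩ := hst
    rw [mem_suppF] at hi hj
    rcases le_total (lineC G i j x) 0 with hc | hc
    · exact key i j hadj hi hj hc
    · refine key j i hadj.symm hj hi ?_
      rw [lineC_swap]; linarith

lemma fG_smul_indic (G : SimpleGraph (Fin n)) {S : Finset (Fin n)} (hS : IsStable G S)
    (c : ℝ) : fG G (c • indic S) = c^2 * S.card := by
  have hsub : suppF (c • indic S) ⊆ S := by
    intro k hk
    rw [mem_suppF] at hk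
    by_contra hkS
    simp [indic, hkS] at hk
  have hst : IsStable G (suppF (c • indic S)) :=
    fun a ha b hb => hS a (hsub ha) b (hsub hb)
  rw [fG_stable G hst]
  have : ∀ k, ((c • indic S) k)^2 = if k ∈ S then c^2 else 0 := by
    intro k
    by_cases hk : k ∈ S <;> simp [indic, hk, mul_pow]
  simp only [this, Finset.sum_ite_mem, Finset.univ_inter, Finset.sum_const,
    nsmul_eq_mul]
  ring

lemma indic_mem_simplex {S : Finset (Fin n)} {a : ℕ} (ha : 0 < a) (hcard : S.card = a) :
    (a:ℝ)⁻¹ • indic S ∈ stdSimplex ℝ (Fin n) := by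
  have ha' : (0:ℝ) < a := by exact_mod_cast ha
  constructor
  · intro k
    by_cases hk : k ∈ S <;> simp [indic, hk] <;> positivity
  · have : ∑ k, ((a:ℝ)⁻¹ • indic S) k = (a:ℝ)⁻¹ * ∑ k, indic S k := by
      simp [Finset.mul_sum]
    rw [this]
    have : ∑ k, indic S k = (S.card : ℝ) := by
      simp [indic, Finset.sum_ite_mem]
    rw [this, hcard]
    field_simp

lemma indic_mem_globMin (hn : 0 < n) (G : SimpleGraph (Fin n)) {S : Finset (Fin n)}
    (hS : IsStable G S) (hcard : S.card = alpha G) :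
    (alpha G : ℝ)⁻¹ • indic S ∈ globMin (fG G) := by
  have ha : (0:ℝ) < alpha G := by exact_mod_cast alpha_pos hn G
  refine ⟨indic_mem_simplex (alpha_pos hn G) hcard, ?_⟩
  intro y hy
  have h1 := lower_bound G y hy
  have h2 : fG G ((alpha G : ℝ)⁻¹ • indic S) = (alpha G : ℝ)⁻¹ := by
    rw [fG_smul_indic G hS, hcard]
    field_simp
  rw [h2]
  rw [inv_le_iff_one_le_mul₀ ha]
  linarith [h1]

lemma fG_delete (G : SimpleGraph (Fin n)) {i j : Fin n} (h : G.Adj i j) (x : Fin n → ℝ) :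
    fG (G.deleteEdges {s(i,j)}) x = fG G x - 2 * (x i * x j) := by
  have hij : i ≠ j := h.ne
  rw [fG_eq, fG_eq]
  have key : ∀ k l, (if (G.deleteEdges {s(i,j)}).Adj k l then x k * x l else 0) =
      (if G.Adj k l then x k * x l else 0) -
      ((if k = i then if l = j then x k * x l else 0 else 0) +
       (if k = j then if l = i then x k * x l else 0 else 0)) := by
    intro k l
    have hadj : (G.deleteEdges {s(i,j)}).Adj k l ↔
        G.Adj k l ∧ ¬(k = i ∧ l = j ∨ k = j ∧ l = i) := by
      rw [SimpleGraph.deleteEdges_adj]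
      simp [Sym2.eq_iff]
    have e0 : (if (G.deleteEdges {s(i,j)}).Adj k l then x k * x l else 0) =
        (if G.Adj k l ∧ ¬(k = i ∧ l = j ∨ k = j ∧ l = i) then x k * x l else 0) := by
      by_cases hd : (G.deleteEdges {s(i,j)}).Adj k l
      · rw [if_pos hd, if_pos (hadj.1 hd)]
      · rw [if_neg hd, if_neg (fun hc => hd (hadj.2 hc))]
    rw [e0]
    by_cases h1 : k = i ∧ l = j
    · obtain ⟨rfl, rfl⟩ := h1
      simp [h, hij]
    · by_cases h2 : k = j ∧ l = i
      · obtain ⟨rfl, rfl⟩ := h2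
        simp [h.symm, hij, hij.symm]
      · have hnot : ¬(k = i ∧ l = j ∨ k = j ∧ l = i) := by tauto
        have e1 : (if k = i then if l = j then x k * x l else 0 else 0) = 0 := by
          split_ifs with hk hl
          · exact absurd ⟨hk, hl⟩ h1
          · rfl
          · rfl
        have e2 : (if k = j then if l = i then x k * x l else 0 else 0) = 0 := by
          split_ifs with hk hl
          · exact absurd ⟨hk, hl⟩ h2
          · rfl
          · rfl
        rw [e1, e2]
        by_cases hG : G.Adj k l
        · simp [hG, hnot]
        · simp [hG]
  have key' : ∀ k l, @ite ℝ ((G.deleteEdges {s(i,j)}).Adj k l) (Classical.propDecidable _)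
      (x k * x l) 0 = _ := fun k l =>
    (show @ite ℝ _ (Classical.propDecidable _) (x k * x l) 0 =
      (if (G.deleteEdges {s(i,j)}).Adj k l then x k * x l else 0) by congr!).trans (key k l)
  simp only [key', Finset.sum_sub_distrib, Finset.sum_add_distrib]
  have s1 : ∑ k, ∑ l, (if k = i then if l = j then x k * x l else 0 else 0) = x i * x j := by
    rw [Finset.sum_eq_single i]
    · simp
    · intro b _ hb; simp [hb]
    · intro hmem; exact absurd (Finset.mem_univ i) hmem
  have s2 : ∑ k, ∑ l, (if k = j then if l = i then x k * x l else 0 else 0) = x j * x i := by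
    rw [Finset.sum_eq_single j]
    · simp
    · intro b _ hb; simp [hb]
    · intro hmem; exact absurd (Finset.mem_univ j) hmem
  rw [s1, s2]; ring

lemma alpha_le_delete (G : SimpleGraph (Fin n)) (s : Set (Sym2 (Fin n))) :
    alpha G ≤ alpha (G.deleteEdges s) := by
  obtain ⟨S, hS, hcard⟩ := alpha_exists G
  rw [← hcard]
  exact card_le_alpha (fun a ha b hb hadj => hS a ha b hb hadj.1)

lemma min_char (hn : 0 < n) (G : SimpleGraph (Fin n))
    (hcrit : ∀ i j, G.Adj i j → alpha (G.deleteEdges {s(i, j)}) = alpha G)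
    {x : Fin n → ℝ} (hx : x ∈ globMin (fG G)) :
    ∃ S : Finset (Fin n), IsStable G S ∧ S.card = alpha G ∧
      x = (alpha G : ℝ)⁻¹ • indic S := by
  have ha : (0:ℝ) < alpha G := by exact_mod_cast alpha_pos hn G
  -- value of the minimum
  obtain ⟨S₀, hS₀, hc₀⟩ := alpha_exists G
  have hx₀ := indic_mem_globMin hn G hS₀ hc₀
  have hval : fG G x = (alpha G : ℝ)⁻¹ := by
    have hle : fG G x ≤ (alpha G : ℝ)⁻¹ := by
      have := hx.2 _ hx₀.1
      have h2 : fG G ((alpha G : ℝ)⁻¹ • indic S₀) = (alpha G : ℝ)⁻¹ := by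
        rw [fG_smul_indic G hS₀, hc₀]
        field_simp
      linarith [h2 ▸ this]
    have hge := lower_bound G x hx.1
    refine le_antisymm hle ?_
    rw [inv_le_iff_one_le_mul₀ ha]; linarith
  -- support is stable
  have hst : IsStable G (suppF x) := by
    intro i hi j hj hadj
    rw [mem_suppF] at hi hj
    have hxi : 0 < x i := (hx.1.1 i).lt_of_ne' hi
    have hxj : 0 < x j := (hx.1.1 j).lt_of_ne' hj
    have hdel := fG_delete G hadj x
    have hlow := lower_bound (G.deleteEdges {s(i,j)}) x hx.1
    rw [hcrit i j hadj, hdel, hval] at hlow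
    have : (alpha G : ℝ) * ((alpha G : ℝ)⁻¹ - 2 * (x i * x j)) < 1 := by
      rw [mul_sub, mul_inv_cancel₀ (ne_of_gt ha)]
      nlinarith [mul_pos ha (mul_pos hxi hxj)]
    linarith
  have sumS : ∑ k ∈ suppF x, x k = 1 := by
    rw [suppF, Finset.sum_filter_ne_zero]; exact hx.1.2
  have sumsq_univ : ∑ k, (x k)^2 = (alpha G:ℝ)⁻¹ := by rw [← fG_stable G hst, hval]
  have sumsqS : ∑ k ∈ suppF x, (x k)^2 = (alpha G:ℝ)⁻¹ := by
    rw [← sumsq_univ]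
    apply Finset.sum_subset (Finset.subset_univ _)
    intro k _ hk
    rw [mem_suppF, not_not] at hk
    simp [hk]
  have hcard_ge : (alpha G : ℝ) ≤ (suppF x).card := by
    have h1 := sq_sum_le_card_mul_sum_sq (s := suppF x) (f := x)
    rw [sumS, sumsqS] at h1
    norm_num at h1
    rw [← div_eq_mul_inv, one_le_div ha] at h1
    exact h1
  have hcardn : (suppF x).card = alpha G :=
    le_antisymm (card_le_alpha hst) (by exact_mod_cast hcard_ge)
  have zero : ∑ k ∈ suppF x, (x k - (alpha G:ℝ)⁻¹)^2 = 0 := by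
    have expand : ∀ k ∈ suppF x, (x k - (alpha G:ℝ)⁻¹)^2 =
        ((x k)^2 - 2*((alpha G:ℝ)⁻¹ * x k)) + ((alpha G:ℝ)⁻¹)^2 := fun k _ => by ring
    rw [Finset.sum_congr rfl expand, Finset.sum_add_distrib, Finset.sum_sub_distrib,
      ← Finset.mul_sum, ← Finset.mul_sum, sumS, sumsqS, Finset.sum_const, hcardn,
      nsmul_eq_mul]
    field_simp
    ring
  have hxk : ∀ k ∈ suppF x, x k = (alpha G:ℝ)⁻¹ := by
    intro k hk
    have h0 := (Finset.sum_eq_zero_iff_of_nonneg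
      (fun k _ => sq_nonneg (x k - (alpha G:ℝ)⁻¹))).1 zero k hk
    have h1 : x k - (alpha G:ℝ)⁻¹ = 0 := by
      exact pow_eq_zero_iff (two_ne_zero) |>.1 h0
    linarith
  refine ⟨suppF x, hst, hcardn, ?_⟩
  funext k
  by_cases hk : x k = 0
  · have hkS : k ∉ suppF x := by rw [mem_suppF]; exact not_not.2 hk
    simp [hk, indic, hkS]
  · have hkS : k ∈ suppF x := mem_suppF.2 hk
    simp [indic, hkS, hxk k hkS]

lemma infinite_of_critical (hn : 0 < n) (G : SimpleGraph (Fin n)) {i j : Fin n}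
    (hadj : G.Adj i j) (hne : alpha (G.deleteEdges {s(i,j)}) ≠ alpha G) :
    (globMin (fG G)).Infinite := by
  classical
  set G' := G.deleteEdges {s(i,j)} with hG'
  have hij : i ≠ j := hadj.ne
  have hapos := alpha_pos hn G
  have ha : (0:ℝ) < alpha G := by exact_mod_cast hapos
  have hgt : alpha G < alpha G' := lt_of_le_of_ne (alpha_le_delete G _) (Ne.symm hne)
  obtain ⟨T₀, hT₀, hcT₀⟩ := alpha_exists G'
  obtain ⟨T, hTsub, hcT⟩ := Finset.exists_subset_card_eq (s := T₀) (n := alpha G + 1)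
    (by rw [hcT₀]; omega)
  have hTst : IsStable G' T := fun a ha b hb => hT₀ a (hTsub ha) b (hTsub hb)
  have hpair : ∀ a ∈ T, ∀ b ∈ T, G.Adj a b → (a = i ∧ b = j) ∨ (a = j ∧ b = i) := by
    intro a haT b hbT hab
    by_contra hc
    refine hTst a haT b hbT ?_
    rw [hG', SimpleGraph.deleteEdges_adj]
    refine ⟨hab, ?_⟩
    simp only [Set.mem_singleton_iff, Sym2.eq_iff]
    exact hc
  have hiT : i ∈ T := by
    by_contra hiT
    have : IsStable G T := by
      intro a haT b hbT hab
      rcases hpair a haT b hbT hab with ⟨rfl, rfl⟩ | ⟨rfl, rfl⟩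
      · exact hiT haT
      · exact hiT hbT
    have := card_le_alpha this
    omega
  have hjT : j ∈ T := by
    by_contra hjT
    have : IsStable G T := by
      intro a haT b hbT hab
      rcases hpair a haT b hbT hab with ⟨rfl, rfl⟩ | ⟨rfl, rfl⟩
      · exact hjT hbT
      · exact hjT haT
    have := card_le_alpha this
    omega
  -- the two extreme stable sets
  have hSi : IsStable G (T.erase i) := by
    intro a haT b hbT hab
    rcases hpair a (Finset.mem_of_mem_erase haT) b (Finset.mem_of_mem_erase hbT) hab with
      ⟨rfl, rfl⟩ | ⟨rfl, rfl⟩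
    · exact (Finset.ne_of_mem_erase haT) rfl
    · exact (Finset.ne_of_mem_erase hbT) rfl
  have hSj : IsStable G (T.erase j) := by
    intro a haT b hbT hab
    rcases hpair a (Finset.mem_of_mem_erase haT) b (Finset.mem_of_mem_erase hbT) hab with
      ⟨rfl, rfl⟩ | ⟨rfl, rfl⟩
    · exact (Finset.ne_of_mem_erase hbT) rfl
    · exact (Finset.ne_of_mem_erase haT) rfl
  have hcSi : (T.erase i).card = alpha G := by
    rw [Finset.card_erase_of_mem hiT, hcT]; omega
  have hcSj : (T.erase j).card = alpha G := by
    rw [Finset.card_erase_of_mem hjT, hcT]; omega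
  set u := (alpha G : ℝ)⁻¹ • indic (T.erase j) with hu
  set v := (alpha G : ℝ)⁻¹ • indic (T.erase i) with hv
  have huMin := indic_mem_globMin hn G hSj hcSj
  have hvMin := indic_mem_globMin hn G hSi hcSi
  have hukey : ∀ k, u k = (alpha G : ℝ)⁻¹ * (if k ∈ T.erase j then 1 else 0) := by
    intro k; simp [hu, indic]
  have hvu : v = u + (alpha G : ℝ)⁻¹ • dvec j i := by
    funext k
    have hk1 : v k = (alpha G : ℝ)⁻¹ * (if k ∈ T.erase i then 1 else 0) := by
      simp [hv, indic]
    rw [hk1]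
    show _ = u k + (alpha G : ℝ)⁻¹ * dvec j i k
    rw [hukey, dvec_apply]
    by_cases hki : k = i
    · subst hki
      have h1 : k ∉ T.erase k := by simp
      have h2 : k ∈ T.erase j := Finset.mem_erase.2 ⟨hij, hiT⟩
      rw [if_neg h1, if_pos h2, if_neg hij, if_pos rfl]
      ring
    · by_cases hkj : k = j
      · subst hkj
        have h1 : k ∈ T.erase i := Finset.mem_erase.2 ⟨hki, hjT⟩
        have h2 : k ∉ T.erase k := by simp
        rw [if_pos h1, if_neg h2, if_pos rfl, if_neg hki]
        ring
      · have m1 : (k ∈ T.erase i) ↔ k ∈ T := by simp [Finset.mem_erase, hki]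
        have m2 : (k ∈ T.erase j) ↔ k ∈ T := by simp [Finset.mem_erase, hkj]
        rw [if_neg hkj, if_neg hki]
        by_cases hkT : k ∈ T
        · rw [if_pos (m1.2 hkT), if_pos (m2.2 hkT)]; ring
        · rw [if_neg (fun h => hkT (m1.1 h)), if_neg (fun h => hkT (m2.1 h))]; ring
  have hfu : fG G u = (alpha G : ℝ)⁻¹ := by
    rw [hu, fG_smul_indic G hSj, hcSj]; field_simp
  have hfv : fG G v = (alpha G : ℝ)⁻¹ := by
    rw [hv, fG_smul_indic G hSi, hcSi]; field_simp
  have hc0 : lineC G j i u = 0 := by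
    have hl := fG_line G hadj.symm u ((alpha G : ℝ)⁻¹)
    rw [← hvu, hfu, hfv] at hl
    have h2 : (alpha G : ℝ)⁻¹ * lineC G j i u = 0 := by linarith
    have h3 : (alpha G : ℝ)⁻¹ ≠ 0 := by positivity
    exact (mul_eq_zero.1 h2).resolve_left h3
  set F : ℝ → (Fin n → ℝ) := fun t => u + (t * (alpha G : ℝ)⁻¹) • dvec j i with hF
  have hFk : ∀ t k, F t k = u k + (t * (alpha G : ℝ)⁻¹) * dvec j i k := fun t k => rfl
  have hFj : ∀ t, F t j = t * (alpha G : ℝ)⁻¹ := by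
    intro t
    rw [hFk, hukey, dvec_apply]
    have h1 : j ∉ T.erase j := by simp
    rw [if_neg h1, if_pos rfl, if_neg (Ne.symm hij)]
    ring
  have hainv : (0:ℝ) < (alpha G : ℝ)⁻¹ := by positivity
  have hmem : ∀ t ∈ Set.Icc (0:ℝ) 1, F t ∈ globMin (fG G) := by
    rintro t ⟨ht0, ht1⟩
    have hΔ : F t ∈ stdSimplex ℝ (Fin n) := by
      constructor
      · intro k
        rw [hFk, hukey, dvec_apply]
        by_cases hki : k = i
        · subst hki
          have h2 : k ∈ T.erase j := Finset.mem_erase.2 ⟨hij, hiT⟩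
          rw [if_pos h2, if_neg hij, if_pos rfl]
          nlinarith
        · by_cases hkj : k = j
          · subst hkj
            have h1 : k ∉ T.erase k := by simp
            rw [if_neg h1, if_pos rfl, if_neg hki]
            nlinarith
          · rw [if_neg hkj, if_neg hki]
            by_cases hm : k ∈ T.erase j
            · rw [if_pos hm]; nlinarith
            · rw [if_neg hm]; nlinarith
      · have hsum : ∑ k, F t k = ∑ k, u k + (t * (alpha G : ℝ)⁻¹) * ∑ k, dvec j i k := by
          simp [hFk, Finset.sum_add_distrib, Finset.mul_sum]
        have husum : ∑ k, u k = 1 := huMin.1.2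
        rw [hsum, sum_dvec, husum]; ring
    refine ⟨hΔ, fun y hy => ?_⟩
    have hval : fG G (F t) = (alpha G : ℝ)⁻¹ := by
      have : F t = u + (t * (alpha G : ℝ)⁻¹) • dvec j i := rfl
      rw [this, fG_line G hadj.symm, hc0, hfu]; ring
    rw [hval, inv_le_iff_one_le_mul₀ ha]
    linarith [lower_bound G y hy]
  have hinj : Set.InjOn F (Set.Icc (0:ℝ) 1) := by
    intro t1 _ t2 _ hEq
    have h1 := congrFun hEq j
    rw [hFj, hFj] at h1
    have h3 : (alpha G : ℝ)⁻¹ ≠ 0 := by positivity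
    exact mul_right_cancel₀ h3 h1
  have hIccInf : (Set.Icc (0:ℝ) 1).Infinite := Set.Icc_infinite (by norm_num)
  exact (hIccInf.image hinj).mono (Set.image_subset_iff.2 fun t ht => hmem t ht)

theorem stmt_7 (n : ℕ) (hn : 0 < n) (G : SimpleGraph (Fin n)) :
    ((∀ i j, G.Adj i j → alpha (G.deleteEdges {s(i, j)}) = alpha G) ↔
      (globMin (fG G)).Finite) ∧
    ((∀ i j, G.Adj i j → alpha (G.deleteEdges {s(i, j)}) = alpha G) →
      globMin (fG G) =
        {x | ∃ S : Finset (Fin n), IsStable G S ∧ S.card = alpha G ∧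
          x = (alpha G : ℝ)⁻¹ • indic S}) := by
  have part2 : (∀ i j, G.Adj i j → alpha (G.deleteEdges {s(i, j)}) = alpha G) →
      globMin (fG G) =
        {x | ∃ S : Finset (Fin n), IsStable G S ∧ S.card = alpha G ∧
          x = (alpha G : ℝ)⁻¹ • indic S} := by
    intro hcrit
    ext x
    constructor
    · intro hx
      exact min_char hn G hcrit hx
    · rintro ⟨S, hS, hcard, rfl⟩
      exact indic_mem_globMin hn G hS hcard
  refine ⟨⟨fun hcrit => ?_, fun hfin => ?_⟩, part2⟩
  · rw [part2 hcrit]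
    have hsub : {x | ∃ S : Finset (Fin n), IsStable G S ∧ S.card = alpha G ∧
          x = (alpha G : ℝ)⁻¹ • indic S} ⊆
        Set.range (fun S : Finset (Fin n) => (alpha G : ℝ)⁻¹ • indic S) := by
      rintro x ⟨S, -, -, rfl⟩
      exact ⟨S, rfl⟩
    exact (Set.finite_range _).subset hsub
  · by_contra hcrit
    push_neg at hcrit
    obtain ⟨i, j, hadj, hne⟩ := hcrit
    exact infinite_of_critical hn G hadj hne hfin
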